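/- arXiv:1812.03767 — 2 statements merged into one kernel-verified Lean document; each statement's English description precedes it below -/
import Mathlib

section
/- Fix integers n ≥ 2 and l ≥ 0. For all α, γ ∈ B^{(n)}_l, the identity K^{(n,l)}(z)^γ_α = K^{(n,l)}(z)^{ρ(α)}_{ρ(γ)} holds in F((t)), where ρ(α) = (α_n, …, α₂, α₁) denotes the reversal. -/
open scoped Classical

set_option maxHeartbeats 1000000
set_option synthInstance.maxHeartbeats 400000

noncomputable section

namespace KOY

/-- `F = ℚ(q)`, the field of rational functions in an indeterminate `q` over `ℚ`. -/
abbrev Fq : Type := RatFunc ℚ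

/-- The indeterminate `q`. -/
def q : Fq := RatFunc.X

/-- `[u] = (q^u - q^{-u})/(q - q⁻¹)`. -/
def qint (u : ℤ) : Fq := (q ^ u - q ^ (-u)) / (q - q⁻¹)

/-- `(z; a)_m = ∏_{k=0}^{m-1} (1 - z a^k)`. -/
def poch {R : Type*} [CommRing R] (z a : R) (m : ℕ) : R :=
  ∏ k ∈ Finset.range m, (1 - z * a ^ k)

/-- The `q`-boson Fock space `⊕_{m ≥ 0} F·|m⟩`. -/
abbrev Fock : Type := ℕ →₀ Fq

/-- creation operator `a⁺ |m⟩ = |m+1⟩`. -/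
def aP : Module.End Fq Fock := Finsupp.lift Fock Fq ℕ fun m => Finsupp.single (m + 1) 1

/-- annihilation operator `a⁻ |m⟩ = (1-q^m)|m-1⟩`. -/
def aM : Module.End Fq Fock :=
  Finsupp.lift Fock Fq ℕ fun m => (1 - q ^ m) • Finsupp.single (m - 1) 1

/-- `k |m⟩ = q^m |m⟩`. -/
def kO : Module.End Fq Fock := Finsupp.lift Fock Fq ℕ fun m => q ^ m • Finsupp.single m 1

/-- The operator `G^j_i` for `i, j ≥ 0` (`i` = lower index, `j` = upper index):
`G^j_i = (-q;q)_{i+j} Σ_{m=0}^{t} ((q^{-t};q)_m (-q^{-t};q)_m / ((q;q)_m (-q^{-s};q)_m))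
  (a⁺)^{(j-i)_+} (q^m k^m) (a⁻)^{(i-j)_+}` with `s = i+j`, `t = min i j`. -/
def GopN (i j : ℕ) : Module.End Fq Fock :=
  poch (-q) q (i + j) •
    ∑ m ∈ Finset.range (min i j + 1),
      (poch (q ^ (-(min i j : ℤ))) q m * poch (-q ^ (-(min i j : ℤ))) q m /
          (poch q q m * poch (-q ^ (-((i : ℤ) + j))) q m)) •
        (aP ^ (j - i) * (q ^ m • kO ^ m) * aM ^ (i - j))

/-- `G^j_i` with the convention that it vanishes for negative indices. -/
def Gop (i j : ℤ) : Module.End Fq Fock :=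
  if 0 ≤ i ∧ 0 ≤ j then GopN i.toNat j.toNat else 0

/-- `X_{mm}`: the coefficient of `|m⟩` in `X |m⟩`. -/
def elem (X : Module.End Fq Fock) (m : ℕ) : Fq := X (Finsupp.single m 1) m

/-- `⟨a, b⟩ = ∑_{i<j} a_i b_j` (natural numbers). -/
def innN {n : ℕ} (a b : Fin n → ℕ) : ℕ := ∑ i, ∑ j, if i < j then a i * b j else 0

/-- `⟨a, b⟩ = ∑_{i<j} a_i b_j` (integers). -/
def innZ {n : ℕ} (a b : Fin n → ℤ) : ℤ := ∑ i, ∑ j, if i < j then a i * b j else 0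

/-- `|a| = ∑ a_i`. -/
def asum {k : ℕ} (a : Fin k → ℤ) : ℤ := ∑ i, a i

/-- coercion of arrays to integer arrays. -/
def castZ {n : ℕ} (a : Fin n → ℕ) : Fin n → ℤ := fun i => (a i : ℤ)

/-- The matrix product formula for `K^{(n,l)}(z)^γ_α` as a power series in `t = z⁻¹`:
`q^{⟨γ,α⟩} (q^{-l}t;q)_{l+1} ((q²;q²)_l (-qt;q)_l)⁻¹ Σ_{m≥0} q^{-lm} t^m (G^{γ₁}_{α₁}⋯G^{γₙ}_{αₙ})_{mm}`,
with coefficients transported along a ring hom `f` from `ℚ(q)`. -/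
def KmatPS {K : Type*} [Field K] (f : Fq →+* K) (n l : ℕ) (α γ : Fin n → ℕ) :
    PowerSeries K :=
  PowerSeries.C (R := K) (f (q ^ innN γ α)) *
    poch (PowerSeries.C (R := K) (f (q ^ (-(l : ℤ)))) * PowerSeries.X) (PowerSeries.C (R := K) (f q)) (l + 1) *
    (PowerSeries.C (R := K) (f (poch (q ^ 2) (q ^ 2) l)) *
        poch (PowerSeries.C (R := K) (f (-q)) * PowerSeries.X) (PowerSeries.C (R := K) (f q)) l)⁻¹ *
    PowerSeries.mk fun m =>
      f (q ^ (-(l * m : ℤ)) * elem (List.ofFn fun i => Gop (α i) (γ i)).prod m)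

/-- `F((t))`, the field of formal Laurent series in `t`. -/
abbrev LS : Type := LaurentSeries Fq

/-- `K^{(n,l)}(z)^γ_α ∈ F((t))` (first array = lower index `α`, second = upper index `γ`). -/
def Kmat (n l : ℕ) (α γ : Fin n → ℕ) : LS :=
  HahnSeries.ofPowerSeries ℤ Fq (KmatPS (RingHom.id Fq) n l α γ)

/-- Extension of `Kmat` to integer arrays, vanishing if some entry is negative. -/
def KmatZ (n l : ℕ) (α γ : Fin n → ℤ) : LS :=
  if (∀ i, 0 ≤ α i) ∧ ∀ i, 0 ≤ γ i then
    Kmat n l (fun i => (α i).toNat) fun i => (γ i).toNat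
  else 0

/-- `t ∈ F((t))`. -/
def T : LS := HahnSeries.single (1 : ℤ) (1 : Fq)

/-- the constant embedding `F → F((t))`. -/
def CL : Fq →+* LS := HahnSeries.C

/-- `Φ̄_q(γ|β; λ, μ)` for integer arrays, vanishing unless `0 ≤ γ ≤ β`. -/
def phiBarP {K : Type*} [Field K] (qv lam mu : K) {k : ℕ} (γ β : Fin k → ℤ) : K :=
  if ∀ i, 0 ≤ γ i ∧ γ i ≤ β i then
    poch lam qv (asum γ).toNat * poch (mu / lam) qv (asum β - asum γ).toNat /
        poch mu qv (asum β).toNat *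
      ∏ i, poch qv qv (β i).toNat / (poch qv qv (β i - γ i).toNat * poch qv qv (γ i).toNat)
  else 0

/-- `Φ_q(γ|β; λ, μ) = q^{⟨β-γ,γ⟩} (μ/λ)^{|γ|} Φ̄_q(γ|β; λ, μ)`. -/
def phiP {K : Type*} [Field K] (qv lam mu : K) {k : ℕ} (γ β : Fin k → ℤ) : K :=
  qv ^ innZ (β - γ) γ * (mu / lam) ^ asum γ * phiBarP qv lam mu γ β

/-- truncation `ᾱ = (α₁, …, α_{n-1})` (as an integer array). -/
def bar {n : ℕ} (a : Fin n → ℕ) : Fin (n - 1) → ℤ :=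
  fun i => (a ⟨i.val, by have := i.isLt; omega⟩ : ℤ)

/-- `A^{(l,m)}(z)^{γ,δ}_{α,β}
  = q^{⟨α,β⟩-⟨δ,γ⟩} Σ_{ξ̄+η̄=γ̄+δ̄} Φ_{q²}(ξ̄-δ̄|ξ̄; q^{m-l}z, q^{-l-m}z) Φ_{q²}(η̄|β̄; q^{-l-m}z⁻¹, q^{-2m})`
in any field, for chosen values of `q` and `z`. -/
def Amat {K : Type*} [Field K] (qv zv : K) {n : ℕ} (l m : ℕ) (γ δ α β : Fin n → ℕ) : K :=
  qv ^ ((innN α β : ℤ) - (innN δ γ : ℤ)) *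
    ∑ ξ ∈ Finset.Icc (0 : Fin (n - 1) → ℤ) (bar γ + bar δ),
      phiP (qv ^ 2) (qv ^ ((m : ℤ) - l) * zv) (qv ^ (-(l : ℤ) - m) * zv) (ξ - bar δ) ξ *
        phiP (qv ^ 2) (qv ^ (-(l : ℤ) - m) * zv⁻¹) (qv ^ (-(2 * m : ℤ))) (bar γ + bar δ - ξ)
          (bar β)

/-- `𝒮(λ,μ)^{γ,δ}_{α,β} = θ(γ+δ=α+β) q^{⟨β-γ,γ⟩+⟨α,β-γ⟩+|α||β|-|γ||δ|} λ^{2(|δ|-|α|)}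
  Φ̄_{q²}(α|δ; λ², μ²)`, the parametric `R` matrix element. -/
def Smat {K : Type*} [Field K] (qv lam mu : K) {k : ℕ} (γ δ α β : Fin k → ℕ) : K :=
  if γ + δ = α + β then
    qv ^ (innZ (castZ β - castZ γ) (castZ γ) + innZ (castZ α) (castZ β - castZ γ) +
          (asum (castZ α) * asum (castZ β) - asum (castZ γ) * asum (castZ δ))) *
      lam ^ (2 * (asum (castZ δ) - asum (castZ α))) *
      phiBarP (qv ^ 2) (lam ^ 2) (mu ^ 2) (castZ α) (castZ δ)
  else 0

/-- reversal `ρ(a) = (a_n, …, a_1)`. -/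
def rev {n : ℕ} {M : Type*} (a : Fin n → M) : Fin n → M := fun i => a i.rev

/-- cyclic shift `σ(a) = (a_2, …, a_n, a_1)`. -/
def cyc {n : ℕ} {M : Type*} (a : Fin n → M) : Fin n → M :=
  fun i => a ⟨(i.val + 1) % n, Nat.mod_lt _ (by have := i.isLt; omega)⟩

/-- the cyclic successor on `Fin n`. -/
def nxt {n : ℕ} (i : Fin n) : Fin n :=
  ⟨(i.val + 1) % n, Nat.mod_lt _ (by have := i.isLt; omega)⟩

/-- deletion of the `i`-th entry of an array. -/
def del {n : ℕ} (i : Fin n) (a : Fin n → ℕ) : Fin (n - 1) → ℕ :=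
  fun j =>
    if (j : ℕ) < (i : ℕ) then a ⟨j, by have := j.isLt; omega⟩
    else a ⟨(j : ℕ) + 1, by have := j.isLt; omega⟩

/-- the `q²`-binomial coefficient `binom(b, c)_{q²}` as an element of `ℚ(q)`. -/
def qbinom2 (b c : ℕ) : Fq :=
  poch (q ^ 2) (q ^ 2) b / (poch (q ^ 2) (q ^ 2) (b - c) * poch (q ^ 2) (q ^ 2) c)

/-- `ℚ(q)(z) = ℚ(q, z)`. -/
abbrev Fqz : Type := RatFunc Fq

/-- the image of `q` in `ℚ(q, z)`. -/
def qz : Fqz := RatFunc.C q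

/-- the indeterminate `z` in `ℚ(q, z)`. -/
def zz : Fqz := RatFunc.X

-- weight and bilinear form
def wt (m : ℕ) : Fq := poch q q m

def B : Fock →ₗ[Fq] Fock →ₗ[Fq] Fq :=
  Finsupp.lift _ Fq ℕ fun m => wt m • Finsupp.lapply m

lemma B_single_left (m : ℕ) (v : Fock) : B (Finsupp.single m 1) v = wt m * v m := by
  simp [B, Finsupp.lift_apply, Finsupp.sum_single_index]

lemma B_single_right (v : Fock) (m : ℕ) : B v (Finsupp.single m 1) = v m * wt m := by
  induction v using Finsupp.induction_linear with
  | zero => simp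
  | add f g hf hg => simp [hf, hg, add_mul]
  | single a c =>
      simp only [B, Finsupp.lift_apply, Finsupp.sum_single_index, zero_smul,
        LinearMap.smul_apply, Finsupp.lapply_apply, smul_eq_mul, Finsupp.single_apply]
      split_ifs with h1 h2 h3
      · subst h1; ring
      · exact absurd h1.symm h2
      · exact absurd h3.symm h1
      · simp

def Trans (X Y : Module.End Fq Fock) : Prop := ∀ v w, B (X v) w = B v (Y w)

lemma trans_one : Trans 1 1 := fun _ _ => rfl

lemma trans_mul {X X' Y Y' : Module.End Fq Fock} (h : Trans X Y) (h' : Trans X' Y') :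
    Trans (X * X') (Y' * Y) := fun v w => by
  rw [Module.End.mul_apply, Module.End.mul_apply, h, h']

lemma trans_pow {X Y : Module.End Fq Fock} (h : Trans X Y) : ∀ p, Trans (X ^ p) (Y ^ p)
  | 0 => by simpa [pow_zero] using trans_one
  | p + 1 => by
      rw [pow_succ, pow_succ']
      exact trans_mul (trans_pow h p) h

lemma trans_smul {X Y : Module.End Fq Fock} (c : Fq) (h : Trans X Y) :
    Trans (c • X) (c • Y) := fun v w => by
  simp [LinearMap.smul_apply, h v w]

lemma trans_sum {ι : Type*} {s : Finset ι} {X Y : ι → Module.End Fq Fock}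
    (h : ∀ i ∈ s, Trans (X i) (Y i)) :
    Trans (∑ i ∈ s, X i) (∑ i ∈ s, Y i) := fun v w => by
  simp only [LinearMap.sum_apply, map_sum, LinearMap.coe_sum, Finset.sum_apply]
  exact Finset.sum_congr rfl fun i hi => h i hi v w

lemma trans_ext {X Y : Module.End Fq Fock}
    (h : ∀ a b, B (X (Finsupp.single a 1)) (Finsupp.single b 1)
      = B (Finsupp.single a 1) (Y (Finsupp.single b 1))) : Trans X Y := by
  intro v w
  induction v using Finsupp.induction_linear with
  | zero => simp
  | add f g hf hg => simp [hf, hg]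
  | single a c =>
    induction w using Finsupp.induction_linear with
    | zero => simp
    | add f g hf hg => simp [hf, hg]
    | single b d =>
      rw [show (Finsupp.single a c : Fock) = c • Finsupp.single a 1 by
            simp [Finsupp.smul_single'],
          show (Finsupp.single b d : Fock) = d • Finsupp.single b 1 by
            simp [Finsupp.smul_single']]
      simp only [map_smul, LinearMap.smul_apply, smul_eq_mul]
      rw [h]

lemma aP_single (a : ℕ) : aP (Finsupp.single a 1) = Finsupp.single (a + 1) 1 := by
  simp [aP, Finsupp.lift_apply, Finsupp.sum_single_index]

lemma aM_single (a : ℕ) :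
    aM (Finsupp.single a 1) = (1 - q ^ a) • Finsupp.single (a - 1) 1 := by
  simp [aM, Finsupp.lift_apply, Finsupp.sum_single_index]

lemma kO_single (a : ℕ) : kO (Finsupp.single a 1) = q ^ a • Finsupp.single a 1 := by
  simp only [kO, Finsupp.lift_apply]
  rw [Finsupp.sum_single_index] <;> simp

lemma wt_succ (a : ℕ) : wt (a + 1) = wt a * (1 - q * q ^ a) := by
  simp [wt, poch, Finset.prod_range_succ]

lemma trans_aP : Trans aP aM := by
  apply trans_ext
  intro a b
  rw [aP_single, aM_single]
  simp only [map_smul, LinearMap.smul_apply, smul_eq_mul, B_single_left,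
    Finsupp.single_apply]
  by_cases hb : b = a + 1
  · subst hb
    have h1 : a + 1 - 1 = a := by omega
    simp only [h1, if_pos rfl, wt_succ, pow_succ]
    ring
  · rcases Nat.eq_zero_or_pos b with h0 | h0
    · subst h0; simp [hb]
    · have h1 : ¬ (b - 1 = a) := by omega
      simp [hb, h1]

lemma trans_aM : Trans aM aP := by
  apply trans_ext
  intro a b
  rw [aP_single, aM_single]
  simp only [map_smul, LinearMap.smul_apply, smul_eq_mul, B_single_left,
    Finsupp.single_apply]
  by_cases ha : a = b + 1
  · subst ha
    have h1 : b + 1 - 1 = b := by omega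
    simp only [h1, if_pos rfl, wt_succ, pow_succ]
    ring
  · rcases Nat.eq_zero_or_pos a with h0 | h0
    · subst h0; simp [ha]
    · have h1 : ¬ (b = a - 1) := by omega
      have h2 : ¬ (b + 1 = a) := by omega
      simp [h1, h2]

lemma trans_kO : Trans kO kO := by
  apply trans_ext
  intro a b
  rw [kO_single, kO_single]
  simp only [map_smul, LinearMap.smul_apply, smul_eq_mul, B_single_left,
    Finsupp.single_apply]
  by_cases hb : b = a
  · subst hb; ring
  · simp [hb]


lemma wt_ne_zero (m : ℕ) : wt m ≠ 0 := by
  simp only [wt, poch]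
  rw [Finset.prod_ne_zero_iff]
  intro k _
  intro hc
  have hq : (q : Fq) ^ (k + 1) = 1 := by
    have : (q : Fq) * q ^ k = 1 := by linear_combination -hc
    rw [pow_succ, mul_comm]
    exact this
  have : (Polynomial.X : Polynomial ℚ) ^ (k + 1) = 1 := by
    apply RatFunc.algebraMap_injective ℚ
    rw [map_pow, map_one, RatFunc.algebraMap_X]
    exact hq
  have := congrArg (Polynomial.eval 0) this
  simp at this

lemma elem_eq_of_trans {X Y : Module.End Fq Fock} (h : Trans X Y) (m : ℕ) :
    elem X m = elem Y m := by
  have h1 := h (Finsupp.single m 1) (Finsupp.single m 1)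
  rw [B_single_right, B_single_left] at h1
  unfold elem
  exact mul_right_cancel₀ (wt_ne_zero m) (h1.trans (mul_comm _ _))

lemma trans_GopN (i j : ℕ) : Trans (GopN i j) (GopN j i) := by
  unfold GopN
  rw [Nat.min_comm j i, Nat.add_comm j i, add_comm (j : ℤ) i, min_comm (j : ℤ) (i : ℤ)]
  apply trans_smul
  apply trans_sum
  intro m _
  apply trans_smul
  rw [mul_assoc]
  exact trans_mul (trans_pow trans_aP (j - i))
    (trans_mul (trans_smul _ (trans_pow trans_kO m)) (trans_pow trans_aM (i - j)))

lemma Gop_coe (i j : ℕ) : Gop i j = GopN i j := by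
  simp [Gop]

lemma trans_list : ∀ {l1 l2 : List (Module.End Fq Fock)}, List.Forall₂ Trans l1 l2 →
    Trans l1.prod l2.reverse.prod
  | _, _, List.Forall₂.nil => by simpa using trans_one
  | _, _, List.Forall₂.cons h hs => by
      simp only [List.prod_cons, List.reverse_cons, List.prod_append, List.prod_cons,
        List.prod_nil, mul_one]
      exact trans_mul h (trans_list hs)

lemma forall₂_ofFn {n : ℕ} (f g : Fin n → Module.End Fq Fock)
    (h : ∀ i, Trans (f i) (g i)) :
    List.Forall₂ Trans (List.ofFn f) (List.ofFn g) := by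
  rw [List.forall₂_iff_get]
  refine ⟨by simp, fun i h1 h2 => ?_⟩
  rw [List.get_ofFn, List.get_ofFn]
  exact h _

lemma ofFn_rev {M : Type*} : ∀ {n : ℕ} (f : Fin n → M),
    (List.ofFn fun i => f i.rev) = (List.ofFn f).reverse
  | 0, f => by simp
  | n + 1, f => by
      have IH := ofFn_rev fun i : Fin n => f i.castSucc
      rw [List.ofFn_succ' f, List.ofFn_succ (f := fun i => f i.rev)]
      rw [List.concat_eq_append, List.reverse_append]
      simp only [List.reverse_cons, List.reverse_nil, List.nil_append, List.cons_append,
        List.singleton_append]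
      rw [Fin.rev_zero, ← IH]
      exact congrArg _ (congrArg List.ofFn (funext fun i => by rw [Fin.rev_succ]))

lemma sum_rev {M : Type*} [AddCommMonoid M] {n : ℕ} (f : Fin n → M) :
    ∑ i : Fin n, f i.rev = ∑ i : Fin n, f i :=
  Fintype.sum_equiv Fin.revPerm _ _ fun i => rfl

lemma innN_rev {n : ℕ} (a b : Fin n → ℕ) : innN (rev a) (rev b) = innN b a := by
  unfold innN rev
  calc ∑ i : Fin n, ∑ j : Fin n, (if i < j then a i.rev * b j.rev else 0)
      = ∑ i : Fin n, ∑ j : Fin n, (if i.rev < j then a i * b j.rev else 0) := by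
        rw [← sum_rev fun i : Fin n => ∑ j : Fin n, if i < j then a i.rev * b j.rev else 0]
        simp [Fin.rev_rev]
    _ = ∑ i : Fin n, ∑ j : Fin n, (if i.rev < j.rev then a i * b j else 0) := by
        refine Finset.sum_congr rfl fun i _ => ?_
        rw [← sum_rev fun j : Fin n => if i.rev < j then a i * b j.rev else 0]
        simp [Fin.rev_rev]
    _ = ∑ i : Fin n, ∑ j : Fin n, (if j < i then a i * b j else 0) := by
        simp [Fin.rev_lt_rev]
    _ = ∑ j : Fin n, ∑ i : Fin n, (if j < i then a i * b j else 0) := Finset.sum_comm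
    _ = ∑ i : Fin n, ∑ j : Fin n, (if i < j then b i * a j else 0) := by
        refine Finset.sum_congr rfl fun i _ => Finset.sum_congr rfl fun j _ => ?_
        rw [mul_comm]

/-- `K(z)^γ_α = K(z)^{ρ(α)}_{ρ(γ)}` where `ρ` is the reversal. -/
theorem statement5 (n l : ℕ) (hn : 2 ≤ n) (α γ : Fin n → ℕ)
    (hα : ∑ i, α i = l) (hγ : ∑ i, γ i = l) :
    Kmat n l α γ = Kmat n l (rev γ) (rev α) := by
  have hinn : innN (rev α) (rev γ) = innN γ α := innN_rev α γ
  have helem : ∀ m, elem ((List.ofFn fun i => Gop (α i) (γ i)).prod) m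
      = elem ((List.ofFn fun i => Gop ((rev γ i : ℕ) : ℤ) ((rev α i : ℕ) : ℤ)).prod) m := by
    intro m
    apply elem_eq_of_trans
    simp only [rev]
    have hl : (List.ofFn fun i : Fin n => Gop ((γ i.rev : ℕ) : ℤ) ((α i.rev : ℕ) : ℤ))
        = (List.ofFn fun i : Fin n => Gop ((γ i : ℕ) : ℤ) ((α i : ℕ) : ℤ)).reverse :=
      ofFn_rev (fun i : Fin n => Gop ((γ i : ℕ) : ℤ) ((α i : ℕ) : ℤ))
    rw [hl]
    apply trans_list
    apply forall₂_ofFn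
    intro i
    rw [Gop_coe, Gop_coe]
    exact trans_GopN _ _
  unfold Kmat KmatPS
  congr 1
  rw [hinn]
  congr 1
  ext m
  simp only [PowerSeries.coeff_mk]
  rw [helem m]

end KOY
end
end

section
/- Fix integers n ≥ 2 and l ≥ m ≥ 0. For all α, γ ∈ B^{(n)}_l and β, δ ∈ B^{(n)}_m with γ + δ = α + β, the rational function z ↦ A^{(m,l)}(z)^{δ,γ}_{β,α} ∈ ℚ(q)(z) is regular at z = q^{m−l}, and its value there equals θ(δ ≤ α) · q^{⟨β, α−δ⟩ + ⟨α−δ, δ⟩} · binom(l,m)_{q²}^{−1} · ∏_{i=1}^{n} binom(α_i, δ_i)_{q²}. (Equivalently, the R matrix with elements R(z)^{γ,δ}_{α,β} = θ(γ+δ = α+β) A^{(m,l)}(z)^{δ,γ}_{β,α} factorizes at the special point z = q^{m−l}.) -/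
open scoped Classical

noncomputable section

namespace KOY

section RegAtKit

/-- `f` is regular at `z = c` with value `v`. -/
def RegAt (c : Fq) (f : Fqz) (v : Fq) : Prop :=
  ∃ p s : Polynomial Fq, Polynomial.eval c s ≠ 0 ∧
    f * algebraMap (Polynomial Fq) Fqz s = algebraMap (Polynomial Fq) Fqz p ∧
    Polynomial.eval c p = v * Polynomial.eval c s

theorem RegAt.out {c : Fq} {f : Fqz} {v : Fq} (h : RegAt c f v) :
    Polynomial.eval c (RatFunc.denom f) ≠ 0 ∧ RatFunc.eval (RingHom.id Fq) c f = v := by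
  obtain ⟨p, s, hs, hfs, hev⟩ := h
  have hs0 : s ≠ 0 := by rintro rfl; simp at hs
  have hf : f = algebraMap (Polynomial Fq) Fqz p / algebraMap (Polynomial Fq) Fqz s := by
    rw [eq_div_iff (RatFunc.algebraMap_ne_zero hs0)]; exact hfs
  obtain ⟨t, ht⟩ := (RatFunc.denom_dvd hs0).mpr ⟨p, hf⟩
  have hden : Polynomial.eval c (RatFunc.denom f) ≠ 0 := by
    intro h0; apply hs; rw [ht, Polynomial.eval_mul, h0, zero_mul]
  refine ⟨hden, ?_⟩
  have hns : RatFunc.num f * s = p * RatFunc.denom f := by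
    apply RatFunc.algebraMap_injective
    rw [map_mul, map_mul]
    have hnum' := (div_eq_iff
      (RatFunc.algebraMap_ne_zero (RatFunc.denom_ne_zero f))).mp (RatFunc.num_div_denom f)
    rw [hnum']
    linear_combination (algebraMap (Polynomial Fq) Fqz (RatFunc.denom f)) * hfs
  have hev2 : Polynomial.eval c (RatFunc.num f) * Polynomial.eval c s =
      v * Polynomial.eval c s * Polynomial.eval c (RatFunc.denom f) := by
    rw [← Polynomial.eval_mul, hns, Polynomial.eval_mul, hev]
  have hnum : Polynomial.eval c (RatFunc.num f) = v * Polynomial.eval c (RatFunc.denom f) :=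
    mul_right_cancel₀ hs (by rw [hev2]; ring)
  rw [RatFunc.eval]
  have hid : ∀ p : Polynomial Fq, Polynomial.eval₂ (RingHom.id Fq) c p = Polynomial.eval c p :=
    fun p => rfl
  rw [hid, hid, hnum, mul_div_assoc, div_self hden, mul_one]

variable {c : Fq}

theorem regAt_C (a : Fq) : RegAt c (RatFunc.C a) a :=
  ⟨Polynomial.C a, 1, by simp, by simp [RatFunc.algebraMap_C], by simp⟩

theorem regAt_X : RegAt c RatFunc.X c :=
  ⟨Polynomial.X, 1, by simp, by simp [RatFunc.algebraMap_X], by simp⟩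

theorem regAt_zero : RegAt c 0 0 := by simpa using regAt_C 0

theorem regAt_one : RegAt c 1 1 := by simpa using regAt_C 1

theorem RegAt.congr {f v w} (h : RegAt c f v) (hv : v = w) : RegAt c f w := hv ▸ h

theorem RegAt.add {f g v w} (hf : RegAt c f v) (hg : RegAt c g w) : RegAt c (f + g) (v + w) := by
  obtain ⟨p1, s1, hs1, h1, e1⟩ := hf
  obtain ⟨p2, s2, hs2, h2, e2⟩ := hg
  refine ⟨p1 * s2 + p2 * s1, s1 * s2, by simp [hs1, hs2], ?_, ?_⟩
  · rw [map_mul, map_add, map_mul, map_mul, ← h1, ← h2]; ring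
  · simp only [Polynomial.eval_add, Polynomial.eval_mul, e1, e2]; ring

theorem RegAt.mul {f g v w} (hf : RegAt c f v) (hg : RegAt c g w) : RegAt c (f * g) (v * w) := by
  obtain ⟨p1, s1, hs1, h1, e1⟩ := hf
  obtain ⟨p2, s2, hs2, h2, e2⟩ := hg
  refine ⟨p1 * p2, s1 * s2, by simp [hs1, hs2], ?_, ?_⟩
  · rw [map_mul, map_mul, ← h1, ← h2]; ring
  · simp only [Polynomial.eval_mul, e1, e2]; ring

theorem RegAt.neg {f v} (hf : RegAt c f v) : RegAt c (-f) (-v) := by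
  have := (regAt_C (c := c) (-1)).mul hf
  simpa using this

theorem RegAt.sub {f g v w} (hf : RegAt c f v) (hg : RegAt c g w) : RegAt c (f - g) (v - w) := by
  simpa [sub_eq_add_neg] using hf.add hg.neg

theorem RegAt.inv {f v} (hf : RegAt c f v) (hv : v ≠ 0) : RegAt c f⁻¹ v⁻¹ := by
  obtain ⟨p, s, hs, h1, e1⟩ := hf
  have hp : Polynomial.eval c p ≠ 0 := by rw [e1]; exact mul_ne_zero hv hs
  have hp0 : p ≠ 0 := by rintro rfl; simp at hp
  have hf0 : f ≠ 0 := by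
    rintro rfl; rw [zero_mul] at h1
    exact RatFunc.algebraMap_ne_zero hp0 h1.symm
  refine ⟨s, p, hp, ?_, ?_⟩
  · rw [← h1, ← mul_assoc, inv_mul_cancel₀ hf0, one_mul]
  · rw [e1, ← mul_assoc, inv_mul_cancel₀ hv, one_mul]

theorem RegAt.div {f g v w} (hf : RegAt c f v) (hg : RegAt c g w) (hw : w ≠ 0) :
    RegAt c (f / g) (v / w) := by
  simpa [div_eq_mul_inv] using hf.mul (hg.inv hw)

theorem RegAt.pow {f v} (hf : RegAt c f v) (k : ℕ) : RegAt c (f ^ k) (v ^ k) := by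
  induction k with
  | zero => simpa using regAt_one
  | succ k ih => rw [pow_succ, pow_succ]; exact ih.mul hf

theorem RegAt.zpow {f v} (hf : RegAt c f v) (hv : v ≠ 0) (k : ℤ) : RegAt c (f ^ k) (v ^ k) := by
  rcases le_or_gt 0 k with h | h
  · lift k to ℕ using h
    rw [zpow_natCast, zpow_natCast]; exact hf.pow k
  · obtain ⟨j, rfl⟩ : ∃ j : ℕ, k = -(j : ℤ) := ⟨k.natAbs, by omega⟩
    rw [zpow_neg, zpow_neg, zpow_natCast, zpow_natCast]
    exact (hf.pow j).inv (pow_ne_zero _ hv)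

theorem regAt_sum {ι : Type*} (s : Finset ι) (f : ι → Fqz) (v : ι → Fq)
    (h : ∀ i ∈ s, RegAt c (f i) (v i)) : RegAt c (∑ i ∈ s, f i) (∑ i ∈ s, v i) := by
  classical
  induction s using Finset.induction_on with
  | empty => simpa using regAt_zero
  | insert _ _ hx ih =>
    rw [Finset.sum_insert hx, Finset.sum_insert hx]
    exact (h _ (Finset.mem_insert_self _ _)).add
      (ih fun i hi => h i (Finset.mem_insert_of_mem hi))

theorem regAt_prod {ι : Type*} (s : Finset ι) (f : ι → Fqz) (v : ι → Fq)
    (h : ∀ i ∈ s, RegAt c (f i) (v i)) : RegAt c (∏ i ∈ s, f i) (∏ i ∈ s, v i) := by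
  classical
  induction s using Finset.induction_on with
  | empty => simpa using regAt_one
  | insert _ _ hx ih =>
    rw [Finset.prod_insert hx, Finset.prod_insert hx]
    exact (h _ (Finset.mem_insert_self _ _)).mul
      (ih fun i hi => h i (Finset.mem_insert_of_mem hi))

theorem regAt_poch {f g v w} (hf : RegAt c f v) (hg : RegAt c g w) (m : ℕ) :
    RegAt c (poch f g m) (poch v w m) := by
  unfold poch
  exact regAt_prod _ _ _ fun k _ => regAt_one.sub (hf.mul (hg.pow k))

end RegAtKit

section PochFacts

variable {K : Type*} [Field K]

theorem map_poch {L : Type*} [Field L] (h : K →+* L) (z a : K) (m : ℕ) :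
    h (poch z a m) = poch (h z) (h a) m := by
  unfold poch; rw [map_prod]; exact Finset.prod_congr rfl fun k _ => by rw [map_sub, map_one, map_mul, map_pow]

theorem poch_add (z a : K) (j k : ℕ) : poch z a (j + k) = poch z a j * poch (z * a ^ j) a k := by
  unfold poch
  rw [Finset.prod_range_add]
  congr 1
  exact Finset.prod_congr rfl fun i _ => by rw [mul_assoc, ← pow_add]

theorem poch_succ_left (z a : K) (k : ℕ) : poch z a (k + 1) = (1 - z) * poch (z * a) a k := by
  rw [add_comm, poch_add]; simp [poch]

theorem poch_eq_zero {z a : K} {m : ℕ} (j : ℕ) (hj : j < m) (h : z * a ^ j = 1) :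
    poch z a m = 0 := by
  unfold poch
  exact Finset.prod_eq_zero (Finset.mem_range.mpr hj) (by rw [h]; ring)

theorem poch_ne_zero {z a : K} {m : ℕ} (h : ∀ k < m, z * a ^ k ≠ 1) : poch z a m ≠ 0 := by
  unfold poch
  rw [Finset.prod_ne_zero_iff]
  intro k hk
  rw [Finset.mem_range] at hk
  exact fun h0 => h k hk (by linear_combination -h0)

end PochFacts

section QFacts

theorem q_ne_zero : (q : Fq) ≠ 0 := RatFunc.X_ne_zero

theorem q_pow_ne_one {k : ℤ} (hk : k ≠ 0) : (q : Fq) ^ k ≠ 1 := by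
  have key : ∀ j : ℕ, j ≠ 0 → (q : Fq) ^ (j : ℤ) ≠ 1 := by
    intro j hj
    rw [zpow_natCast]
    unfold q
    rw [← RatFunc.algebraMap_X (K := ℚ), ← map_pow]
    intro h
    have h1 : algebraMap (Polynomial ℚ) Fq (Polynomial.X ^ j) = algebraMap (Polynomial ℚ) Fq 1 := by
      simpa using h
    have := RatFunc.algebraMap_injective (K := ℚ) h1
    have hdeg := congrArg Polynomial.natDegree this
    simp [Polynomial.natDegree_X_pow] at hdeg
    exact hj hdeg
  rcases lt_or_gt_of_ne hk with h | h
  · obtain ⟨j, hj, rfl⟩ : ∃ j : ℕ, j ≠ 0 ∧ k = -(j : ℤ) := ⟨k.natAbs, by omega, by omega⟩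
    rw [zpow_neg]
    intro h1
    exact key j hj (by rw [← inv_inv ((q : Fq) ^ (j:ℤ)), h1, inv_one])
  · obtain ⟨j, hj, rfl⟩ : ∃ j : ℕ, j ≠ 0 ∧ k = (j : ℤ) := ⟨k.natAbs, by omega, by omega⟩
    exact key j hj

theorem q_zpow_ne_zero (k : ℤ) : (q : Fq) ^ k ≠ 0 := zpow_ne_zero k q_ne_zero

theorem poch_q_ne_zero {e : ℤ} (he : 0 < e) (m : ℕ) : poch ((q : Fq) ^ e) (q ^ (2:ℕ)) m ≠ 0 := by
  apply poch_ne_zero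
  intro k _
  have h2 : ((q : Fq) ^ (2:ℕ)) ^ k = q ^ ((2 * k : ℕ) : ℤ) := by rw [← pow_mul, zpow_natCast]
  rw [h2, ← zpow_add₀ q_ne_zero]
  exact q_pow_ne_one (by push_cast; omega)

end QFacts



section ArrayFacts

theorem innZ_add_left {n : ℕ} (a b c : Fin n → ℤ) : innZ (a + b) c = innZ a c + innZ b c := by
  unfold innZ
  rw [← Finset.sum_add_distrib]
  refine Finset.sum_congr rfl fun i _ => ?_
  rw [← Finset.sum_add_distrib]
  refine Finset.sum_congr rfl fun j _ => ?_
  split <;> simp [add_mul]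

theorem innZ_add_right {n : ℕ} (a b c : Fin n → ℤ) : innZ a (b + c) = innZ a b + innZ a c := by
  unfold innZ
  rw [← Finset.sum_add_distrib]
  refine Finset.sum_congr rfl fun i _ => ?_
  rw [← Finset.sum_add_distrib]
  refine Finset.sum_congr rfl fun j _ => ?_
  split <;> simp [mul_add]

theorem innZ_neg_left {n : ℕ} (a c : Fin n → ℤ) : innZ (-a) c = -innZ a c := by
  unfold innZ
  rw [← Finset.sum_neg_distrib]
  refine Finset.sum_congr rfl fun i _ => ?_
  rw [← Finset.sum_neg_distrib]
  refine Finset.sum_congr rfl fun j _ => ?_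
  split <;> simp

theorem innZ_neg_right {n : ℕ} (a c : Fin n → ℤ) : innZ a (-c) = -innZ a c := by
  unfold innZ
  rw [← Finset.sum_neg_distrib]
  refine Finset.sum_congr rfl fun i _ => ?_
  rw [← Finset.sum_neg_distrib]
  refine Finset.sum_congr rfl fun j _ => ?_
  split <;> simp

theorem innZ_sub_left {n : ℕ} (a b c : Fin n → ℤ) : innZ (a - b) c = innZ a c - innZ b c := by
  rw [sub_eq_add_neg, innZ_add_left, innZ_neg_left]; ring

theorem innZ_sub_right {n : ℕ} (a b c : Fin n → ℤ) : innZ a (b - c) = innZ a b - innZ a c := by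
  rw [sub_eq_add_neg, innZ_add_right, innZ_neg_right]; ring

theorem innZ_zero_right {n : ℕ} (a : Fin n → ℤ) : innZ a 0 = 0 := by
  unfold innZ
  refine Finset.sum_eq_zero fun i _ => Finset.sum_eq_zero fun j _ => ?_
  split <;> simp

theorem innN_cast {n : ℕ} (a b : Fin n → ℕ) : ((innN a b : ℕ) : ℤ) = innZ (castZ a) (castZ b) := by
  unfold innN innZ castZ
  push_cast
  refine Finset.sum_congr rfl fun i _ => Finset.sum_congr rfl fun j _ => ?_
  split <;> simp

theorem asum_add {k : ℕ} (a b : Fin k → ℤ) : asum (a + b) = asum a + asum b := by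
  unfold asum; rw [← Finset.sum_add_distrib]; rfl

theorem asum_sub {k : ℕ} (a b : Fin k → ℤ) : asum (a - b) = asum a - asum b := by
  unfold asum; rw [← Finset.sum_sub_distrib]; rfl

theorem asum_zero {k : ℕ} : asum (0 : Fin k → ℤ) = 0 := by simp [asum]

theorem asum_nonneg {k : ℕ} {a : Fin k → ℤ} (h : ∀ i, 0 ≤ a i) : 0 ≤ asum a :=
  Finset.sum_nonneg fun i _ => h i

theorem asum_pos {k : ℕ} {a : Fin k → ℤ} (h : ∀ i, 0 ≤ a i) (hne : a ≠ 0) : 0 < asum a := by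
  rcases lt_or_eq_of_le (asum_nonneg h) with h1 | h1
  · exact h1
  · exfalso; apply hne
    funext i
    have := (Finset.sum_eq_zero_iff_of_nonneg (fun i _ => h i)).mp h1.symm i (Finset.mem_univ i)
    simpa using this

theorem bar_castSucc {n : ℕ} (a : Fin (n + 1) → ℕ) : bar a = fun i : Fin n => (a i.castSucc : ℤ) :=
  rfl

theorem asum_bar {n : ℕ} (a : Fin (n + 1) → ℕ) :
    asum (bar a) = ((∑ i, a i : ℕ) : ℤ) - a (Fin.last n) := by
  have h0 : asum (bar a) = ∑ i : Fin n, (a i.castSucc : ℤ) := rfl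
  rw [h0, Fin.sum_univ_castSucc (f := a)]
  push_cast
  ring

theorem innZ_castSucc {n : ℕ} (a b : Fin (n + 1) → ℤ) :
    innZ a b = innZ (fun i : Fin n => a i.castSucc) (fun i => b i.castSucc) +
      (∑ i : Fin n, a i.castSucc) * b (Fin.last n) := by
  unfold innZ
  rw [Fin.sum_univ_castSucc
    (f := fun i : Fin (n + 1) => ∑ j, if i < j then a i * b j else 0)]
  have h1 : ∀ i : Fin n, (∑ j : Fin (n + 1), if i.castSucc < j then a i.castSucc * b j else 0)
      = (∑ j : Fin n, if i < j then a i.castSucc * b j.castSucc else 0) +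
        a i.castSucc * b (Fin.last n) := by
    intro i
    rw [Fin.sum_univ_castSucc
      (f := fun j : Fin (n + 1) => if i.castSucc < j then a i.castSucc * b j else 0)]
    rw [if_pos (Fin.castSucc_lt_last i)]
    simp [Fin.castSucc_lt_castSucc_iff]
  have h2 : (∑ j : Fin (n + 1), if Fin.last n < j then a (Fin.last n) * b j else 0) = 0 :=
    Finset.sum_eq_zero fun j _ => if_neg (not_lt.mpr (Fin.le_last j))
  rw [h2, add_zero]
  simp only [h1]
  rw [Finset.sum_add_distrib, Finset.sum_mul]

theorem castZ_nonneg {n : ℕ} (a : Fin n → ℕ) (i : Fin n) : 0 ≤ castZ a i := Int.ofNat_nonneg _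

end ArrayFacts

section QBinom

theorem poch_succ {K : Type*} [Field K] (z a : K) (m : ℕ) :
    poch z a (m + 1) = poch z a m * (1 - z * a ^ m) := by
  unfold poch; exact Finset.prod_range_succ _ m

theorem one_sub_q_zpow_ne_zero {e : ℤ} (he : e ≠ 0) : (1 : Fq) - q ^ e ≠ 0 :=
  sub_ne_zero_of_ne (Ne.symm (q_pow_ne_one he))

theorem poch_q2_ne_zero (k : ℕ) : poch ((q : Fq) ^ (2:ℕ)) (q ^ (2:ℕ)) k ≠ 0 := by
  apply poch_ne_zero
  intro j _
  have h2 : ((q:Fq) ^ (2:ℕ)) ^ j = q ^ ((2 * j : ℕ) : ℤ) := by rw [← pow_mul, zpow_natCast]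
  rw [h2, ← zpow_natCast q 2, ← zpow_add₀ q_ne_zero]
  exact q_pow_ne_one (by push_cast; omega)

theorem qbinom2_ne_zero (b c : ℕ) : qbinom2 b c ≠ 0 := by
  unfold qbinom2
  exact div_ne_zero (poch_q2_ne_zero b) (mul_ne_zero (poch_q2_ne_zero _) (poch_q2_ne_zero c))

theorem q_sq_pow (j : ℕ) : ((q : Fq) ^ (2:ℕ)) ^ j = q ^ ((2 * j : ℤ)) := by
  rw [← pow_mul, ← zpow_natCast]; push_cast; ring_nf

theorem poch_qinv (N k : ℕ) (hk : k ≤ N) :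
    poch ((q : Fq) ^ (-(2 * (N:ℤ)))) (q ^ (2:ℕ)) k =
      (-1) ^ k * q ^ ((k:ℤ) * k - k - 2 * N * k) *
        (poch ((q:Fq) ^ (2:ℕ)) (q ^ (2:ℕ)) N / poch ((q:Fq) ^ (2:ℕ)) (q ^ (2:ℕ)) (N - k)) := by
  induction k with
  | zero =>
    have : poch ((q : Fq) ^ (-(2 * (N:ℤ)))) (q ^ (2:ℕ)) 0 = 1 := by simp [poch]
    rw [this, Nat.sub_zero, div_self (poch_q2_ne_zero N)]
    simp
  | succ k ih =>
    have hk' : k ≤ N := by omega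
    rw [poch_succ, ih hk']
    have hNk : N - k = (N - (k+1)) + 1 := by omega
    have hsplit : poch ((q:Fq) ^ (2:ℕ)) (q ^ (2:ℕ)) (N - k) =
        poch ((q:Fq) ^ (2:ℕ)) (q ^ (2:ℕ)) (N - (k+1)) * (1 - q ^ (2 * ((N:ℤ) - k))) := by
      rw [hNk, poch_succ]
      have h1 : (q:Fq) ^ (2:ℕ) * ((q:Fq) ^ (2:ℕ)) ^ (N - (k+1)) = q ^ (2 * ((N:ℤ) - k)) := by
        rw [q_sq_pow, ← zpow_natCast q 2, ← zpow_add₀ q_ne_zero]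
        congr 1
        push_cast
        omega
      rw [h1]
    have hfac : 1 - (q:Fq) ^ (-(2 * (N:ℤ))) * ((q:Fq) ^ (2:ℕ)) ^ k =
        (-(q ^ (2 * ((k:ℤ) - N)))) * (1 - q ^ (2 * ((N:ℤ) - k))) := by
      have hGW : (q:Fq) ^ (2*((k:ℤ)-N)) * q ^ (2*((N:ℤ)-k)) = 1 := by
        rw [← zpow_add₀ q_ne_zero, show 2*((k:ℤ)-N)+2*((N:ℤ)-k) = 0 from by ring, zpow_zero]
      have hzk : ((q:Fq) ^ (2:ℕ)) ^ k = q ^ ((2*k : ℤ)) := q_sq_pow k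
      have hm : (q:Fq) ^ (-(2 * (N:ℤ))) * q ^ ((2*k : ℤ)) = q ^ (2*((k:ℤ)-N)) := by
        rw [← zpow_add₀ q_ne_zero]; congr 1; ring
      rw [hzk, hm]
      linear_combination -hGW
    rw [hsplit, hfac]
    have hne : (1 : Fq) - q ^ (2 * ((N:ℤ) - k)) ≠ 0 :=
      one_sub_q_zpow_ne_zero (by omega)
    have hPne := poch_q2_ne_zero (N - (k+1))
    have gen : ∀ S A G Pn Pd W : Fq, W ≠ 0 → Pd ≠ 0 →
        S * A * (Pn / (Pd * W)) * (-G * W) = S * -1 * (A * G) * (Pn / Pd) := by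
      intro S A G Pn Pd W hW hPd
      field_simp
    rw [gen _ _ _ _ _ _ hne hPne]
    push_cast
    rw [← zpow_add₀ q_ne_zero]
    rw [show (k:ℤ)*k - k - 2*N*k + 2*((k:ℤ) - N)
        = ((k:ℤ)+1)*((k:ℤ)+1) - ((k:ℤ)+1) - 2*(N:ℤ)*((k:ℤ)+1) from by ring]
    rw [pow_succ]
    ring

end QBinom

section Star

theorem star (l m a d : ℕ) (hml : m ≤ l) (hd : d ≤ a) (hal : a ≤ l) (hdm : d ≤ m)
    (hLM : m - d ≤ l - a) :
    q ^ (2 * ((m:ℤ) - l) * ((m:ℤ) - d) - 2 * (((l:ℤ) - a) - ((m:ℤ) - d)) * d) *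
      (poch ((q:Fq) ^ (-(2 * (m:ℤ)))) (q ^ (2:ℕ)) (m - d) *
        poch ((q:Fq) ^ (-(2 * ((l - m : ℕ):ℤ)))) (q ^ (2:ℕ)) ((l - a) - (m - d)) /
        poch ((q:Fq) ^ (-(2 * (l:ℤ)))) (q ^ (2:ℕ)) (l - a))
    = (qbinom2 l m)⁻¹ * qbinom2 a d := by
  rw [poch_qinv m (m - d) (by omega), poch_qinv (l - m) ((l - a) - (m - d)) (by omega),
    poch_qinv l (l - a) (by omega)]
  rw [show m - (m - d) = d from by omega, show (l - m) - ((l - a) - (m - d)) = a - d from by omega,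
    show l - (l - a) = a from by omega]
  have gen : ∀ e0 s1 e1 s2 e2 s3 e3 X1 Y1 X2 Y2 X3 Y3 : Fq, s3 ≠ 0 → e3 ≠ 0 → Y1 ≠ 0 → Y2 ≠ 0 →
      X3 ≠ 0 → Y3 ≠ 0 →
      e0 * (s1 * e1 * (X1 / Y1) * (s2 * e2 * (X2 / Y2)) / (s3 * e3 * (X3 / Y3)))
        = (s1 * s2 / s3) * (e0 * e1 * e2 / e3) * ((X1 * X2 * Y3) / (Y1 * Y2 * X3)) := by
    intro e0 s1 e1 s2 e2 s3 e3 X1 Y1 X2 Y2 X3 Y3 h1 h2 h3 h4 h5 h6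
    field_simp
  rw [gen _ _ _ _ _ _ _ _ _ _ _ _ _ (pow_ne_zero _ (by norm_num : (-1:Fq) ≠ 0))
    (zpow_ne_zero _ q_ne_zero) (poch_q2_ne_zero d) (poch_q2_ne_zero (a - d))
    (poch_q2_ne_zero l) (poch_q2_ne_zero a)]
  have hsign : ((-1:Fq) ^ (m - d) * (-1) ^ ((l - a) - (m - d)) / (-1) ^ (l - a)) = 1 := by
    rw [← pow_add, show (m - d) + ((l - a) - (m - d)) = l - a from by omega,
      div_self (pow_ne_zero _ (by norm_num : (-1:Fq) ≠ 0))]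
  have hqpow : q ^ (2 * ((m:ℤ) - l) * ((m:ℤ) - d) - 2 * (((l:ℤ) - a) - ((m:ℤ) - d)) * d) *
      q ^ (((m - d : ℕ):ℤ) * ((m - d : ℕ):ℤ) - ((m - d : ℕ):ℤ) - 2 * (m:ℤ) * ((m - d : ℕ):ℤ)) *
      q ^ ((((l - a) - (m - d) : ℕ):ℤ) * (((l - a) - (m - d) : ℕ):ℤ) -
          (((l - a) - (m - d) : ℕ):ℤ) - 2 * ((l - m : ℕ):ℤ) * (((l - a) - (m - d) : ℕ):ℤ)) /
      q ^ (((l - a : ℕ):ℤ) * ((l - a : ℕ):ℤ) - ((l - a : ℕ):ℤ) - 2 * (l:ℤ) * ((l - a : ℕ):ℤ)) = 1 := by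
    rw [← zpow_add₀ q_ne_zero, ← zpow_add₀ q_ne_zero, ← zpow_sub₀ q_ne_zero]
    rw [show (2 * ((m:ℤ) - l) * ((m:ℤ) - d) - 2 * (((l:ℤ) - a) - ((m:ℤ) - d)) * d +
        (((m - d : ℕ):ℤ) * ((m - d : ℕ):ℤ) - ((m - d : ℕ):ℤ) - 2 * (m:ℤ) * ((m - d : ℕ):ℤ)) +
        ((((l - a) - (m - d) : ℕ):ℤ) * (((l - a) - (m - d) : ℕ):ℤ) -
          (((l - a) - (m - d) : ℕ):ℤ) - 2 * ((l - m : ℕ):ℤ) * (((l - a) - (m - d) : ℕ):ℤ)) -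
        (((l - a : ℕ):ℤ) * ((l - a : ℕ):ℤ) - ((l - a : ℕ):ℤ) - 2 * (l:ℤ) * ((l - a : ℕ):ℤ))) = 0
      from by
        push_cast [Nat.cast_sub hdm, Nat.cast_sub hal, Nat.cast_sub hml, Nat.cast_sub hLM]
        ring]
    exact zpow_zero q
  rw [hsign, hqpow, one_mul, one_mul]
  unfold qbinom2
  rw [inv_div]
  rw [div_mul_div_comm, div_eq_div_iff
    (mul_ne_zero (mul_ne_zero (poch_q2_ne_zero d) (poch_q2_ne_zero (a - d))) (poch_q2_ne_zero l))
    (mul_ne_zero (poch_q2_ne_zero l)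
      (mul_ne_zero (poch_q2_ne_zero (a - d)) (poch_q2_ne_zero d)))]
  ring

end Star

section PhiReg

theorem RegAt.ne_zero {c : Fq} {f : Fqz} {v : Fq} (h : RegAt c f v) (hv : v ≠ 0) : f ≠ 0 := by
  obtain ⟨p, s, hs, h1, e1⟩ := h
  have hp : Polynomial.eval c p ≠ 0 := by rw [e1]; exact mul_ne_zero hv hs
  rintro rfl
  rw [zero_mul] at h1
  apply hp
  have : p = 0 := by
    apply RatFunc.algebraMap_injective Fq
    rw [map_zero]
    exact h1.symm
  rw [this, Polynomial.eval_zero]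

theorem poch_q_zpow_ne_zero {e : ℤ} (mm : ℕ) (h : ∀ j < mm, e + 2 * (j:ℤ) ≠ 0) :
    poch ((q : Fq) ^ e) (q ^ (2:ℕ)) mm ≠ 0 := by
  apply poch_ne_zero
  intro j hj
  rw [q_sq_pow, ← zpow_add₀ q_ne_zero]
  exact q_pow_ne_one (h j hj)

theorem qz_ne_zero : (qz : Fqz) ≠ 0 := fun h =>
  q_ne_zero ((RingHom.injective (RatFunc.C : Fq →+* Fqz))
    (show RatFunc.C q = RatFunc.C 0 by rw [map_zero]; exact h))

theorem zz_ne_C (w : Fq) : (zz : Fqz) ≠ RatFunc.C w := by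
  unfold zz
  rw [← RatFunc.algebraMap_X, ← RatFunc.algebraMap_C]
  intro h
  exact Polynomial.X_ne_C w (RatFunc.algebraMap_injective Fq h)

variable {c : Fq}

theorem regAt_qz : RegAt c qz q := regAt_C q

theorem regAt_qz_zpow (e : ℤ) : RegAt c (qz ^ e) (q ^ e) := regAt_qz.zpow q_ne_zero e

theorem regAt_qz_sq : RegAt c (qz ^ (2:ℕ)) ((q : Fq) ^ (2:ℕ)) := regAt_qz.pow 2

theorem phiP_of_not_cond {K : Type*} [Field K] (qv lam mu : K) {k : ℕ} (g b : Fin k → ℤ)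
    (h : ¬ ∀ i, 0 ≤ g i ∧ g i ≤ b i) : phiP qv lam mu g b = 0 := by
  unfold phiP phiBarP
  rw [if_neg h, mul_zero]

theorem regAt_phiP {lam mu : Fqz} {lv mv : Fq} (hl : RegAt c lam lv) (hm : RegAt c mu mv)
    (hlv : lv ≠ 0) (hmv : mv ≠ 0) {k : ℕ} (g b : Fin k → ℤ)
    (hden : poch mv ((q : Fq) ^ (2:ℕ)) (asum b).toNat ≠ 0) :
    RegAt c (phiP (qz ^ 2) lam mu g b) (phiP ((q : Fq) ^ (2:ℕ)) lv mv g b) := by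
  unfold phiP phiBarP
  by_cases hcond : ∀ i, 0 ≤ g i ∧ g i ≤ b i
  · rw [if_pos hcond, if_pos hcond]
    refine RegAt.mul (RegAt.mul ?_ ?_) (RegAt.mul (RegAt.div (RegAt.mul ?_ ?_) ?_ hden) ?_)
    · exact regAt_qz_sq.zpow (pow_ne_zero _ q_ne_zero) _
    · exact (hm.div hl hlv).zpow (div_ne_zero hmv hlv) _
    · exact regAt_poch hl regAt_qz_sq _
    · exact regAt_poch (hm.div hl hlv) regAt_qz_sq _
    · exact regAt_poch hm regAt_qz_sq _
    · refine regAt_prod _ _ _ fun i _ => RegAt.div ?_ ?_ ?_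
      · exact regAt_poch regAt_qz_sq regAt_qz_sq _
      · exact (regAt_poch regAt_qz_sq regAt_qz_sq _).mul (regAt_poch regAt_qz_sq regAt_qz_sq _)
      · exact mul_ne_zero (poch_q2_ne_zero _) (poch_q2_ne_zero _)
  · rw [if_neg hcond, if_neg hcond, mul_zero, mul_zero]
    exact regAt_zero

theorem phiP_lam_one_eq_zero (mu : Fq) {k : ℕ} (g b : Fin k → ℤ) (hg : 0 < asum g) :
    phiP ((q : Fq) ^ (2:ℕ)) 1 mu g b = 0 := by
  unfold phiP phiBarP
  by_cases hcond : ∀ i, 0 ≤ g i ∧ g i ≤ b i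
  · rw [if_pos hcond]
    have h0 : poch (1 : Fq) (q ^ (2:ℕ)) (asum g).toNat = 0 :=
      poch_eq_zero 0 (by omega) (by simp)
    rw [h0]
    ring
  · rw [if_neg hcond]; ring

theorem phiP_one_left {mu : Fq} {k : ℕ} (b : Fin k → ℤ) (hb : ∀ i, 0 ≤ b i)
    (hden : poch mu ((q : Fq) ^ (2:ℕ)) (asum b).toNat ≠ 0) :
    phiP ((q : Fq) ^ (2:ℕ)) 1 mu 0 b = 1 := by
  unfold phiP phiBarP
  rw [if_pos (fun i => ⟨le_refl _, by simpa using hb i⟩)]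
  rw [innZ_zero_right, asum_zero]
  have h1 : ∀ i : Fin k, (b i - (0 : Fin k → ℤ) i) = b i := fun i => by simp
  have hprod : (∏ i, poch ((q:Fq) ^ (2:ℕ)) (q ^ (2:ℕ)) ((b i).toNat) /
      (poch ((q:Fq) ^ (2:ℕ)) (q ^ (2:ℕ)) ((b i - (0 : Fin k → ℤ) i).toNat) *
        poch ((q:Fq) ^ (2:ℕ)) (q ^ (2:ℕ)) (((0 : Fin k → ℤ) i).toNat))) = 1 := by
    refine Finset.prod_eq_one fun i _ => ?_
    rw [h1 i]
    have : (((0 : Fin k → ℤ) i).toNat) = 0 := by simp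
    rw [this]
    have hp0 : poch ((q:Fq) ^ (2:ℕ)) (q ^ (2:ℕ)) 0 = 1 := by simp [poch]
    rw [hp0, mul_one, div_self (poch_q2_ne_zero _)]
  rw [hprod, sub_zero, div_one]
  have hp0 : poch (1:Fq) ((q:Fq) ^ (2:ℕ)) (Int.toNat 0) = 1 := by simp [poch]
  rw [hp0, one_mul, div_self hden]
  simp

end PhiReg

section PhiReg2

variable {c : Fq}

theorem phiP2_vanish (l m : ℕ) (hml : m ≤ l) {k : ℕ} (e aa : Fin k → ℤ)
    (h : (l:ℤ) - m < asum aa - asum e) :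
    phiP ((q:Fq) ^ (2:ℕ)) ((q:Fq) ^ (-(2 * (m:ℤ)))) ((q:Fq) ^ (-(2 * (l:ℤ)))) e aa = 0 := by
  by_cases hcond : ∀ i, 0 ≤ e i ∧ e i ≤ aa i
  · unfold phiP phiBarP
    rw [if_pos hcond]
    have h0 : poch ((q:Fq) ^ (-(2 * (l:ℤ))) / (q:Fq) ^ (-(2 * (m:ℤ)))) ((q:Fq) ^ (2:ℕ))
        (asum aa - asum e).toNat = 0 := by
      apply poch_eq_zero (l - m) (by omega)
      rw [q_sq_pow, ← zpow_sub₀ q_ne_zero, ← zpow_add₀ q_ne_zero]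
      rw [show (-(2 * (l:ℤ)) - -(2 * (m:ℤ))) + 2 * ((l - m : ℕ):ℤ) = 0 from by
        push_cast [Nat.cast_sub hml]; ring]
      exact zpow_zero q
    rw [h0]
    ring
  · exact phiP_of_not_cond _ _ _ _ _ hcond

theorem regAt_P1_big (l m : ℕ) {k : ℕ} (g b : Fin k → ℤ)
    (hcond : ∀ i, 0 ≤ g i ∧ g i ≤ b i) (hb : (l:ℤ) + 1 ≤ asum b)
    (hgl : asum b ≤ asum g + l) :
    ∃ v, RegAt ((q : Fq) ^ ((m:ℤ) - l))
      (phiP (qz ^ 2) (qz ^ ((l:ℤ) - m) * zz) (qz ^ (-(m:ℤ) - l) * zz) g b) v := by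
  set c : Fq := (q : Fq) ^ ((m:ℤ) - l) with hc
  have hq2 : RegAt c (qz ^ 2) ((q:Fq) ^ (2:ℕ)) := regAt_qz_sq
  have hX : RegAt c zz c := regAt_X
  have hlam : RegAt c (qz ^ ((l:ℤ) - m) * zz) 1 :=
    ((regAt_qz_zpow ((l:ℤ) - m)).mul hX).congr (by
      rw [hc, ← zpow_add₀ q_ne_zero, show ((l:ℤ) - m) + ((m:ℤ) - l) = 0 from by ring, zpow_zero])
  have hmu : RegAt c (qz ^ (-(m:ℤ) - l) * zz) ((q:Fq) ^ (-(2 * (l:ℤ)))) :=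
    ((regAt_qz_zpow (-(m:ℤ) - l)).mul hX).congr (by
      rw [hc, ← zpow_add₀ q_ne_zero]; congr 1; ring)
  unfold phiP phiBarP
  rw [if_pos hcond]
  have hg1 : 0 < asum g := by omega
  obtain ⟨s1', hs1⟩ : ∃ t, (asum g).toNat = t + 1 := ⟨(asum g).toNat - 1, by omega⟩
  obtain ⟨r, hr⟩ : ∃ r, (asum b).toNat = l + (r + 1) := ⟨(asum b).toNat - l - 1, by omega⟩
  rw [hs1, hr, poch_succ_left, poch_add, poch_succ_left]
  have hkey : (1:Fqz) - (qz ^ (-(m:ℤ) - l) * zz) * (qz ^ 2) ^ l =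
      1 - qz ^ ((l:ℤ) - m) * zz := by
    have h2 : ((qz : Fqz) ^ 2) ^ l = qz ^ ((2 * l : ℕ) : ℤ) := by rw [← pow_mul, zpow_natCast]
    have h3 : (qz ^ (-(m:ℤ) - l) * zz) * (qz ^ 2) ^ l = qz ^ ((l:ℤ) - m) * zz := by
      rw [mul_comm (qz ^ (-(m:ℤ) - l)) zz, mul_assoc, h2, ← zpow_add₀ qz_ne_zero]
      rw [show (-(m:ℤ) - l) + ((2 * l : ℕ) : ℤ) = (l:ℤ) - m from by push_cast; ring]
      ring
    rw [h3]
  rw [hkey]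
  have hu : (1:Fqz) - qz ^ ((l:ℤ) - m) * zz ≠ 0 := by
    intro h0
    have h3 : qz ^ ((l:ℤ) - m) * zz = 1 := by linear_combination -h0
    have h4 : zz = qz ^ ((m:ℤ) - l) := by
      calc zz = (qz ^ ((m:ℤ) - l) * qz ^ ((l:ℤ) - m)) * zz := by
            rw [← zpow_add₀ qz_ne_zero, show ((m:ℤ) - l) + ((l:ℤ) - m) = 0 from by ring,
              zpow_zero, one_mul]
        _ = qz ^ ((m:ℤ) - l) * (qz ^ ((l:ℤ) - m) * zz) := by ring
        _ = qz ^ ((m:ℤ) - l) := by rw [h3, mul_one]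
    have h5 : (qz : Fqz) ^ ((m:ℤ) - l) = RatFunc.C ((q:Fq) ^ ((m:ℤ) - l)) := by
      rw [show (qz : Fqz) = RatFunc.C q from rfl, ← map_zpow₀]
    exact zz_ne_C _ (h4.trans h5)
  have hD1 := regAt_poch hmu hq2 l
  have hD1ne : poch ((q:Fq) ^ (-(2 * (l:ℤ)))) ((q:Fq) ^ (2:ℕ)) l ≠ 0 :=
    poch_q_zpow_ne_zero l (fun j hj => by omega)
  have hbase : (q:Fq) ^ (-(2 * (l:ℤ))) * ((q:Fq) ^ (2:ℕ)) ^ l * (q:Fq) ^ (2:ℕ) =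
      (q:Fq) ^ (2:ℤ) := by
    rw [q_sq_pow, ← zpow_add₀ q_ne_zero, ← zpow_natCast q 2, ← zpow_add₀ q_ne_zero]
    congr 1
    push_cast
    ring
  have hD2 := regAt_poch (((hmu.mul (hq2.pow l)).mul hq2).congr hbase) hq2 r
  have hD2ne : poch ((q:Fq) ^ (2:ℤ)) ((q:Fq) ^ (2:ℕ)) r ≠ 0 :=
    poch_q_zpow_ne_zero r (fun j hj => by omega)
  have gen2 : ∀ u A B D1 D2 P : Fqz, u ≠ 0 → D1 ≠ 0 → D2 ≠ 0 →
      u * A * B / (D1 * (u * D2)) * P = A * B / (D1 * D2) * P := by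
    intro u A B D1 D2 P hu' h1' h2'
    have h3' : u * A * B / (D1 * (u * D2)) = A * B / (D1 * D2) := by
      rw [div_eq_div_iff (mul_ne_zero h1' (mul_ne_zero hu' h2')) (mul_ne_zero h1' h2')]
      ring
    rw [h3']
  rw [gen2 _ _ _ _ _ _ hu (hD1.ne_zero hD1ne) (hD2.ne_zero hD2ne)]
  exact ⟨_, RegAt.mul
    (RegAt.mul (hq2.zpow (pow_ne_zero 2 q_ne_zero) _)
      ((hmu.div hlam one_ne_zero).zpow (div_ne_zero (zpow_ne_zero _ q_ne_zero) one_ne_zero) _))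
    (RegAt.mul
      (RegAt.div (RegAt.mul (regAt_poch (hlam.mul hq2) hq2 _)
        (regAt_poch (hmu.div hlam one_ne_zero) hq2 _))
        (hD1.mul hD2) (mul_ne_zero hD1ne hD2ne))
      (regAt_prod _ _ _ (fun i _ => RegAt.div (regAt_poch hq2 hq2 _)
        ((regAt_poch hq2 hq2 _).mul (regAt_poch hq2 hq2 _))
        (mul_ne_zero (poch_q2_ne_zero _) (poch_q2_ne_zero _)))))⟩

end PhiReg2

section BarBridge

theorem innZ_bar_split {n : ℕ} (a b : Fin (n + 1) → ℕ) :
    innZ (castZ a - castZ b) (castZ b) =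
      innZ (bar a - bar b) (bar b) + asum (bar a - bar b) * (b (Fin.last n) : ℤ) := by
  show innZ (castZ a - castZ b) (castZ b) =
      innZ (fun i : Fin n => (castZ a - castZ b) i.castSucc)
        (fun i : Fin n => (castZ b) i.castSucc) +
      (∑ i : Fin n, (castZ a - castZ b) i.castSucc) * (castZ b) (Fin.last n)
  exact innZ_castSucc _ _

theorem prod_split_bar {n : ℕ} (f : Fin (n + 1) → Fq) :
    (∏ i : Fin (n + 1), f i) = (∏ i : Fin (n + 1 - 1), f (Fin.castSucc i)) * f (Fin.last n) := by
  rw [Fin.prod_univ_castSucc (f := f)]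
  rfl

end BarBridge

/-- factorization of `R` at the special point `z = q^{m-l}` (for `l ≥ m`):
the rational function `A^{(m,l)}(z)^{δ,γ}_{β,α}` is regular at `z = q^{m-l}` and its value
there is `θ(δ ≤ α) q^{⟨β,α-δ⟩+⟨α-δ,δ⟩} binom(l,m)_{q²}⁻¹ ∏ᵢ binom(αᵢ,δᵢ)_{q²}`. -/
theorem statement13 (n l m : ℕ) (hn : 2 ≤ n) (hlm : m ≤ l) (α γ β δ : Fin n → ℕ)
    (hα : ∑ i, α i = l) (hγ : ∑ i, γ i = l) (hβ : ∑ i, β i = m) (hδ : ∑ i, δ i = m)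
    (hc : γ + δ = α + β) :
    Polynomial.eval (q ^ ((m : ℤ) - l)) (Amat qz zz m l δ γ β α).denom ≠ 0 ∧
      RatFunc.eval (RingHom.id Fq) (q ^ ((m : ℤ) - l)) (Amat qz zz m l δ γ β α) =
        (if ∀ i, δ i ≤ α i then 1 else 0) *
          q ^ (innZ (castZ β) (castZ α - castZ δ) + innZ (castZ α - castZ δ) (castZ δ)) *
          (qbinom2 l m)⁻¹ * ∏ i, qbinom2 (α i) (δ i) := by
  obtain ⟨N, rfl⟩ : ∃ N, n = N + 1 := ⟨n - 1, by omega⟩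
  set c : Fq := (q : Fq) ^ ((m:ℤ) - l) with hcdef
  have hal : α (Fin.last N) ≤ l := hα ▸ Finset.single_le_sum (f := fun i => α i)
    (fun i _ => Nat.zero_le _) (Finset.mem_univ _)
  have hgl2 : γ (Fin.last N) ≤ l := hγ ▸ Finset.single_le_sum (f := fun i => γ i)
    (fun i _ => Nat.zero_le _) (Finset.mem_univ _)
  have hdm : δ (Fin.last N) ≤ m := hδ ▸ Finset.single_le_sum (f := fun i => δ i)
    (fun i _ => Nat.zero_le _) (Finset.mem_univ _)
  have hbarα : asum (bar α) = (l:ℤ) - α (Fin.last N) := by rw [asum_bar, hα]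
  have hbarγ : asum (bar γ) = (l:ℤ) - γ (Fin.last N) := by rw [asum_bar, hγ]
  have hbarδ : asum (bar δ) = (m:ℤ) - δ (Fin.last N) := by rw [asum_bar, hδ]
  have hclast : γ (Fin.last N) + δ (Fin.last N) = α (Fin.last N) + β (Fin.last N) := by
    have := congrFun hc (Fin.last N); simpa using this
  have hq2 : RegAt c (qz ^ 2) ((q:Fq) ^ (2:ℕ)) := regAt_qz_sq
  have hP2 : ∀ ξ : Fin (N + 1 - 1) → ℤ, RegAt c
      (phiP (qz ^ 2) (qz ^ (-(m:ℤ) - l) * zz⁻¹) (qz ^ (-(2 * (l:ℤ)))) (bar δ + bar γ - ξ) (bar α))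
      (phiP ((q:Fq) ^ (2:ℕ)) ((q:Fq) ^ (-(2 * (m:ℤ)))) ((q:Fq) ^ (-(2 * (l:ℤ))))
        (bar δ + bar γ - ξ) (bar α)) := by
    intro ξ
    refine regAt_phiP ?_ (regAt_qz_zpow _) (zpow_ne_zero _ q_ne_zero) (zpow_ne_zero _ q_ne_zero)
      _ _ ?_
    · refine ((regAt_qz_zpow _).mul (regAt_X.inv ?_)).congr ?_
      · rw [hcdef]; exact zpow_ne_zero _ q_ne_zero
      · rw [hcdef, ← zpow_neg, ← zpow_add₀ q_ne_zero]; congr 1; ring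
    · apply poch_q_zpow_ne_zero
      intro j hj
      rw [hbarα] at hj
      omega
  set V : Fq := phiP ((q:Fq) ^ (2:ℕ)) ((q:Fq) ^ (-(2 * (m:ℤ)))) ((q:Fq) ^ (-(2 * (l:ℤ))))
    (bar δ) (bar α) with hVdef
  have hmem : bar γ ∈ Finset.Icc (0 : Fin (N + 1 - 1) → ℤ) (bar δ + bar γ) := by
    rw [Finset.mem_Icc]
    constructor
    · intro i; exact Int.natCast_nonneg _
    · intro i; exact le_add_of_nonneg_left (Int.natCast_nonneg _)
  have hlam1 : RegAt c (qz ^ ((l:ℤ) - m) * zz) 1 :=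
    ((regAt_qz_zpow ((l:ℤ) - m)).mul regAt_X).congr (by
      rw [hcdef, ← zpow_add₀ q_ne_zero, show ((l:ℤ) - m) + ((m:ℤ) - l) = 0 from by ring,
        zpow_zero])
  have hmu1 : RegAt c (qz ^ (-(m:ℤ) - l) * zz) ((q:Fq) ^ (-(2 * (l:ℤ)))) :=
    ((regAt_qz_zpow (-(m:ℤ) - l)).mul regAt_X).congr (by
      rw [hcdef, ← zpow_add₀ q_ne_zero]; congr 1; ring)
  have hsum : RegAt c
      (∑ ξ ∈ Finset.Icc (0 : Fin (N + 1 - 1) → ℤ) (bar δ + bar γ),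
        phiP (qz ^ 2) (qz ^ ((l:ℤ) - m) * zz) (qz ^ (-(m:ℤ) - l) * zz) (ξ - bar γ) ξ *
          phiP (qz ^ 2) (qz ^ (-(m:ℤ) - l) * zz⁻¹) (qz ^ (-(2 * (l:ℤ))))
            (bar δ + bar γ - ξ) (bar α))
      (∑ ξ ∈ Finset.Icc (0 : Fin (N + 1 - 1) → ℤ) (bar δ + bar γ),
        if ξ = bar γ then V else 0) := by
    refine regAt_sum _ _ _ fun ξ hξ => ?_
    rcases eq_or_ne ξ (bar γ) with rfl | hne
    · have hdenγ : poch ((q:Fq) ^ (-(2 * (l:ℤ)))) ((q:Fq) ^ (2:ℕ)) (asum (bar γ)).toNat ≠ 0 := by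
        apply poch_q_zpow_ne_zero
        intro j hj
        rw [hbarγ] at hj
        omega
      have h1 := regAt_phiP hlam1 hmu1 one_ne_zero (zpow_ne_zero _ q_ne_zero)
        (bar γ - bar γ) (bar γ) hdenγ
      refine (h1.mul (hP2 (bar γ))).congr ?_
      rw [if_pos rfl]
      rw [show bar γ - bar γ = (0 : Fin (N + 1 - 1) → ℤ) from sub_self _]
      rw [phiP_one_left (bar γ) (fun i => Int.natCast_nonneg _) hdenγ, one_mul]
      rw [show bar δ + bar γ - bar γ = bar δ from add_sub_cancel_right _ _]
    · rw [if_neg hne]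
      by_cases hcond1 : ∀ i, 0 ≤ (ξ - bar γ) i ∧ (ξ - bar γ) i ≤ ξ i
      · rcases le_or_gt (asum ξ) (l:ℤ) with hle | hgt
        · have hden : poch ((q:Fq) ^ (-(2 * (l:ℤ)))) ((q:Fq) ^ (2:ℕ)) (asum ξ).toNat ≠ 0 := by
            apply poch_q_zpow_ne_zero
            intro j hj
            omega
          have hgpos : 0 < asum (ξ - bar γ) :=
            asum_pos (fun i => (hcond1 i).1) (sub_ne_zero.mpr hne)
          have h1 := regAt_phiP hlam1 hmu1 one_ne_zero (zpow_ne_zero _ q_ne_zero)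
            (ξ - bar γ) ξ hden
          refine (h1.mul (hP2 ξ)).congr ?_
          rw [phiP_lam_one_eq_zero _ _ _ hgpos, zero_mul]
        · have hglsum : asum ξ ≤ asum (ξ - bar γ) + l := by
            rw [asum_sub]
            have := hbarγ
            omega
          obtain ⟨v, hv⟩ := regAt_P1_big l m (ξ - bar γ) ξ hcond1 (by omega) hglsum
          have hineq : (l:ℤ) - m < asum (bar α) - asum (bar δ + bar γ - ξ) := by
            rw [asum_sub, asum_add, hbarα, hbarδ, hbarγ]
            omega
          refine (hv.mul (hP2 ξ)).congr ?_
          rw [phiP2_vanish l m hlm _ _ hineq, mul_zero]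
      · rw [phiP_of_not_cond _ _ _ _ _ hcond1, zero_mul]
        exact regAt_zero
  have hAmat : RegAt c (Amat qz zz m l δ γ β α)
      ((q:Fq) ^ ((innN β α : ℤ) - (innN γ δ : ℤ)) * V) := by
    unfold Amat
    refine (regAt_qz_zpow _).mul (hsum.congr ?_)
    rw [Finset.sum_ite_eq' _ (bar γ) (fun _ => V), if_pos hmem]
  obtain ⟨hden, heval⟩ := hAmat.out
  refine ⟨hden, ?_⟩
  rw [heval]
  by_cases hda : ∀ i, δ i ≤ α i
  · -- main case
    rw [if_pos hda, one_mul]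
    have hdmL : δ (Fin.last N) ≤ α (Fin.last N) := hda _
    have hLM : m - δ (Fin.last N) ≤ l - α (Fin.last N) := by
      have hsum1 : ∑ i : Fin N, δ i.castSucc + δ (Fin.last N) = m := by
        rw [← hδ, Fin.sum_univ_castSucc]
      have hsum2 : ∑ i : Fin N, α i.castSucc + α (Fin.last N) = l := by
        rw [← hα, Fin.sum_univ_castSucc]
      have hle : ∑ i : Fin N, δ i.castSucc ≤ ∑ i : Fin N, α i.castSucc :=
        Finset.sum_le_sum fun i _ => hda _
      omega
    have hcondV : ∀ i, 0 ≤ bar δ i ∧ bar δ i ≤ bar α i := fun i =>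
      ⟨Int.natCast_nonneg _, by
        show ((δ (Fin.castSucc i) : ℤ)) ≤ ((α (Fin.castSucc i) : ℤ))
        exact_mod_cast hda _⟩
    rw [hVdef]
    unfold phiP phiBarP
    rw [if_pos hcondV]
    have e4 : (asum (bar δ)).toNat = m - δ (Fin.last N) := by rw [hbarδ]; omega
    have e5 : (asum (bar α) - asum (bar δ)).toNat =
        (l - α (Fin.last N)) - (m - δ (Fin.last N)) := by rw [hbarα, hbarδ]; omega
    have e6 : (asum (bar α)).toNat = l - α (Fin.last N) := by rw [hbarα]; omega
    have e7 : (q:Fq) ^ (-(2 * (l:ℤ))) / (q:Fq) ^ (-(2 * (m:ℤ)))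
        = q ^ (-(2 * ((l - m : ℕ):ℤ))) := by
      rw [← zpow_sub₀ q_ne_zero]; congr 1; omega
    rw [e4, e5, e6, e7]
    have e8 : ((q:Fq) ^ (2:ℕ)) ^ innZ (bar α - bar δ) (bar δ)
        = q ^ (2 * innZ (bar α - bar δ) (bar δ)) := by
      rw [← zpow_natCast q 2, ← zpow_mul]
      norm_num
    rw [e8, ← zpow_mul, hbarδ]
    have ePN : (∏ i : Fin (N + 1 - 1), poch ((q:Fq) ^ (2:ℕ)) ((q:Fq) ^ (2:ℕ)) (bar α i).toNat /
        (poch ((q:Fq) ^ (2:ℕ)) ((q:Fq) ^ (2:ℕ)) ((bar α i - bar δ i).toNat) *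
          poch ((q:Fq) ^ (2:ℕ)) ((q:Fq) ^ (2:ℕ)) ((bar δ i).toNat)))
        = ∏ i : Fin (N + 1 - 1), qbinom2 (α i.castSucc) (δ i.castSucc) := by
      refine Finset.prod_congr rfl fun i _ => ?_
      unfold qbinom2
      have f1 : (bar α i).toNat = α i.castSucc := by
        show ((α i.castSucc : ℤ)).toNat = _; omega
      have f2 : (bar δ i).toNat = δ i.castSucc := by
        show ((δ i.castSucc : ℤ)).toNat = _; omega
      have f3 : (bar α i - bar δ i).toNat = α i.castSucc - δ i.castSucc := by
        show ((α i.castSucc : ℤ) - (δ i.castSucc : ℤ)).toNat = _; omega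
      rw [f1, f2, f3]
    have hPfull : (∏ i : Fin (N + 1), qbinom2 (α i) (δ i)) =
        (∏ i : Fin (N + 1 - 1), qbinom2 (α i.castSucc) (δ i.castSucc)) *
          qbinom2 (α (Fin.last N)) (δ (Fin.last N)) :=
      prod_split_bar (fun i => qbinom2 (α i) (δ i))
    rw [ePN, hPfull]
    set PN : Fq := ∏ i : Fin (N + 1 - 1), qbinom2 (α i.castSucc) (δ i.castSucc) with hPNdef
    have hsplit1 : innZ (bar α - bar δ) (bar δ) =
        (innZ (castZ α) (castZ δ) - innZ (castZ δ) (castZ δ)) -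
          (((l:ℤ) - α (Fin.last N)) - ((m:ℤ) - δ (Fin.last N))) * (δ (Fin.last N)) := by
      have h0 := innZ_bar_split α δ
      have e3 : asum (bar α - bar δ)
          = ((l:ℤ) - α (Fin.last N)) - ((m:ℤ) - δ (Fin.last N)) := by
        rw [asum_sub, hbarα, hbarδ]
      rw [e3, innZ_sub_left] at h0
      linarith [h0]
    have hγZ : castZ γ = castZ α + castZ β - castZ δ := by
      funext i
      have := congrFun hc i
      simp only [Pi.add_apply] at this
      simp only [castZ, Pi.add_apply, Pi.sub_apply]
      omega
    have hEXP : (q:Fq) ^ ((innN β α : ℤ) - (innN γ δ : ℤ)) *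
        q ^ (2 * innZ (bar α - bar δ) (bar δ)) *
        q ^ (-(2 * ((l - m : ℕ):ℤ)) * ((m:ℤ) - δ (Fin.last N)))
        = q ^ (innZ (castZ β) (castZ α - castZ δ) + innZ (castZ α - castZ δ) (castZ δ)) *
          q ^ (2 * ((m:ℤ) - l) * ((m:ℤ) - δ (Fin.last N)) -
            2 * (((l:ℤ) - α (Fin.last N)) - ((m:ℤ) - δ (Fin.last N))) * δ (Fin.last N)) := by
      rw [← zpow_add₀ q_ne_zero, ← zpow_add₀ q_ne_zero, ← zpow_add₀ q_ne_zero]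
      congr 1
      rw [innN_cast, innN_cast, hγZ, hsplit1]
      simp only [innZ_sub_left, innZ_add_left, innZ_sub_right]
      push_cast [Nat.cast_sub hlm]
      ring
    have hstar := star l m (α (Fin.last N)) (δ (Fin.last N)) hlm hdmL hal hdm hLM
    set PP : Fq := poch ((q:Fq) ^ (-(2 * (m:ℤ)))) ((q:Fq) ^ (2:ℕ)) (m - δ (Fin.last N)) *
      poch ((q:Fq) ^ (-(2 * ((l - m : ℕ):ℤ)))) ((q:Fq) ^ (2:ℕ))
        ((l - α (Fin.last N)) - (m - δ (Fin.last N))) /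
      poch ((q:Fq) ^ (-(2 * (l:ℤ)))) ((q:Fq) ^ (2:ℕ)) (l - α (Fin.last N)) with hPPdef
    linear_combination (PP * PN) * hEXP +
      ((q:Fq) ^ (innZ (castZ β) (castZ α - castZ δ) + innZ (castZ α - castZ δ) (castZ δ)) * PN) *
        hstar
  · -- theta vanishes
    rw [if_neg hda, zero_mul, zero_mul, zero_mul]
    suffices hV : V = 0 by rw [hV, mul_zero]
    by_cases hmid : ∀ i : Fin N, 0 ≤ bar δ i ∧ bar δ i ≤ bar α i
    · have hlastlt : α (Fin.last N) < δ (Fin.last N) := by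
        by_contra hcon
        apply hda
        intro i
        induction i using Fin.lastCases with
        | last => omega
        | cast j =>
          have h2 := (hmid j).2
          have h3 : ((δ j.castSucc : ℤ)) ≤ ((α j.castSucc : ℤ)) := h2
          exact_mod_cast h3
      rw [hVdef]
      apply phiP2_vanish l m hlm
      rw [hbarα, hbarδ]
      omega
    · rw [hVdef]
      exact phiP_of_not_cond _ _ _ _ _ hmid

end KOY
end
end
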